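/- Let G be a group generated by a finite set S, equipped with the word metric d_S, and let H, K ≤ G be subgroups. Then: (1) H ⊆ N_r(K) for some r ≥ 0 if and only if H is commensurable to a subgroup of K (equivalently, H ∩ K has finite index in H); (2) the Hausdorff distance between H and K is finite if and only if H and K are commensurable (i.e., H ∩ K has finite index in both H and K). -/

import Mathlib

open Metric Set
open scoped NNReal Pointwise

/-- The closed `r`-neighbourhood `N_r(A)` of a subset `A` of a metric space. -/
def nbhd {X : Type*} [PseudoMetricSpace X] (r : ℝ≥0) (A : Set X) : Set X :=
  {x : X | ∃ a ∈ A, nndist x a ≤ r}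

/-- The word length of `g` with respect to a generating set `S`: the least `n` such
that `g` is a product of `n` elements of `S ∪ S⁻¹`. -/
noncomputable def wordLength {G : Type*} [Group G] (S : Set G) (g : G) : ℕ :=
  sInf {n : ℕ | ∃ l : List G, (∀ x ∈ l, x ∈ S ∨ x⁻¹ ∈ S) ∧ l.prod = g ∧ l.length = n}

/-- The metric on `G` is the word metric with respect to `S`. -/
def IsWordMetric {G : Type*} [Group G] [MetricSpace G] (S : Set G) : Prop :=
  ∀ g h : G, dist g h = wordLength S (g⁻¹ * h)

/-- A subset `A ⊆ G` is `H`-finite if `A ⊆ H·R` for some finite `R ⊆ G`. -/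
def HFinite {G : Type*} [Group G] (H : Subgroup G) (A : Set G) : Prop :=
  ∃ R : Set G, R.Finite ∧ A ⊆ (H : Set G) * R

/-- Two subsets are at finite Hausdorff distance if each is contained in some
neighbourhood of the other. -/
def AtFiniteHausdorffDist {X : Type*} [PseudoMetricSpace X] (A B : Set X) : Prop :=
  ∃ r : ℝ≥0, A ⊆ nbhd r B ∧ B ⊆ nbhd r A

namespace WordAux

variable {G : Type*} [Group G]

/-- The ball of radius `n` in the word metric: products of at most `n` generators. -/
def ball (S : Set G) (n : ℕ) : Set G :=
  {g | ∃ l : List G, (∀ x ∈ l, x ∈ S ∨ x⁻¹ ∈ S) ∧ l.prod = g ∧ l.length ≤ n}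

lemma ball_finite {S : Set G} (hS : S.Finite) (n : ℕ) : (ball S n).Finite := by
  induction n with
  | zero =>
    apply Set.Finite.subset (Set.finite_singleton (1 : G))
    rintro g ⟨l, -, rfl, hl⟩
    simp [List.length_eq_zero_iff.mp (Nat.le_zero.mp hl)]
  | succ n ih =>
    apply Set.Finite.subset (((hS.union hS.inv).mul ih).insert 1)
    rintro g ⟨l, hmem, rfl, hl⟩
    cases l with
    | nil => simp
    | cons a l =>
      right
      rw [List.prod_cons]
      refine Set.mul_mem_mul ?_ ⟨l, fun x hx => hmem x (by simp [hx]), rfl, ?_⟩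
      · rcases hmem a (by simp) with h | h
        · exact Or.inl h
        · exact Or.inr (Set.mem_inv.mpr (by simpa using h))
      · simpa using Nat.succ_le_succ_iff.mp hl

lemma ball_inv {S : Set G} {n : ℕ} {g : G} (hg : g ∈ ball S n) : g⁻¹ ∈ ball S n := by
  obtain ⟨l, hmem, rfl, hl⟩ := hg
  refine ⟨(l.map fun x => x⁻¹).reverse, ?_, (List.prod_inv_reverse l).symm, by simpa using hl⟩
  intro x hx
  simp only [List.mem_reverse, List.mem_map] at hx
  obtain ⟨y, hy, rfl⟩ := hx
  simpa [or_comm] using hmem y hy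

lemma exists_word {S : Set G} (hSgen : Subgroup.closure S = ⊤) (g : G) :
    ∃ l : List G, (∀ x ∈ l, x ∈ S ∨ x⁻¹ ∈ S) ∧ l.prod = g := by
  have hg : g ∈ Submonoid.closure (S ∪ S⁻¹) := by
    rw [← Subgroup.closure_toSubmonoid, hSgen]
    exact Subgroup.mem_top g
  obtain ⟨l, hl, hp⟩ := Submonoid.exists_list_of_mem_closure hg
  refine ⟨l, fun x hx => ?_, hp⟩
  rcases hl x hx with h | h
  · exact Or.inl h
  · exact Or.inr (Set.mem_inv.mp h)

lemma mem_ball_of_wordLength {S : Set G} (hSgen : Subgroup.closure S = ⊤) {g : G} {n : ℕ}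
    (h : wordLength S g ≤ n) : g ∈ ball S n := by
  obtain ⟨l, hl, hp⟩ := exists_word hSgen g
  have hne : {m : ℕ | ∃ l : List G, (∀ x ∈ l, x ∈ S ∨ x⁻¹ ∈ S) ∧ l.prod = g ∧
      l.length = m}.Nonempty := ⟨l.length, l, hl, hp, rfl⟩
  obtain ⟨l', hl', hp', hlen⟩ := Nat.sInf_mem hne
  exact ⟨l', hl', hp', hlen.le.trans h⟩

lemma flip_cover {H K : Subgroup G} {F : Set G}
    (hcov : (H : Set G) ⊆ (F : Set G) * (K : Set G)) :
    (H : Set G) ⊆ (K : Set G) * F⁻¹ := by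
  intro h hh
  obtain ⟨f, hf, k, hk, hfk⟩ := hcov (H.inv_mem hh : h⁻¹ ∈ H)
  refine ⟨k⁻¹, K.inv_mem hk, f⁻¹, Set.inv_mem_inv.mpr hf, ?_⟩
  have hfk' : f * k = h⁻¹ := hfk
  have : h = (f * k)⁻¹ := by rw [hfk']; group
  rw [this]; group

lemma relindex_ne_zero_of_cover (H K : Subgroup G) (F : Set G) (hF : F.Finite)
    (hcov : (H : Set G) ⊆ (K : Set G) * F) : K.relIndex H ≠ 0 := by
  -- flip: H ⊆ F⁻¹ * K
  have hcov' : (H : Set G) ⊆ (F⁻¹ : Set G) * (K : Set G) := by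
    intro h hh
    obtain ⟨k, hk, f, hf, hkf⟩ := hcov (H.inv_mem hh : h⁻¹ ∈ H)
    refine ⟨f⁻¹, Set.inv_mem_inv.mpr hf, k⁻¹, K.inv_mem hk, ?_⟩
    have hkf' : k * f = h⁻¹ := hkf
    have : h = (k * f)⁻¹ := by rw [hkf']; group
    rw [this]; group
  have hfin : Finite (H ⧸ K.subgroupOf H) := by
    let φ : (H ⧸ K.subgroupOf H) → G ⧸ K :=
      Quotient.map' Subtype.val (fun a b hab => by
        rw [QuotientGroup.leftRel_apply] at hab ⊢
        simpa [Subgroup.mem_subgroupOf] using hab)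
    have hrange : ∀ q : H ⧸ K.subgroupOf H, φ q ∈ QuotientGroup.mk '' (F⁻¹ : Set G) := by
      intro q
      induction q using Quotient.inductionOn' with
      | h a =>
        obtain ⟨f, hf, k, hk, hfk⟩ := hcov' a.2
        refine ⟨f, hf, ?_⟩
        show QuotientGroup.mk f = QuotientGroup.mk (a : G)
        rw [QuotientGroup.eq]
        have hfk' : f * k = (a : G) := hfk
        have : f⁻¹ * (a : G) = k := by rw [← hfk']; group
        rw [this]; exact hk
    have hinj : Function.Injective φ := by
      intro q1 q2 h
      induction q1 using Quotient.inductionOn' with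
      | h a =>
        induction q2 using Quotient.inductionOn' with
        | h b =>
          apply Quotient.sound'
          rw [QuotientGroup.leftRel_apply, Subgroup.mem_subgroupOf]
          have := Quotient.exact' h
          rwa [QuotientGroup.leftRel_apply] at this
    have hTfin : (QuotientGroup.mk '' (F⁻¹ : Set G) : Set (G ⧸ K)).Finite :=
      (hF.inv).image _
    haveI := hTfin.to_subtype
    exact Finite.of_injective
      (fun q => (⟨φ q, hrange q⟩ : {x // x ∈ QuotientGroup.mk '' (F⁻¹ : Set G)}))
      (fun a b hab => hinj (congrArg Subtype.val hab))
  rw [Subgroup.relIndex]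
  exact Subgroup.index_ne_zero_of_finite

lemma cover_of_relindex (H K : Subgroup G) (h : K.relIndex H ≠ 0) :
    ∃ F : Set G, F.Finite ∧ (H : Set G) ⊆ (K : Set G) * F := by
  rw [Subgroup.relIndex] at h
  haveI hfin : Finite (H ⧸ K.subgroupOf H) := by
    by_contra hc
    rw [not_finite_iff_infinite] at hc
    exact h (Subgroup.index_eq_zero_iff_infinite.mpr hc)
  set T : Set G := Set.range (fun q : H ⧸ K.subgroupOf H => ((Quotient.out q : H) : G)) with hT
  have hTfin : T.Finite := Set.finite_range _
  have hcov : (H : Set G) ⊆ T * (K : Set G) := by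
    intro x hx
    set q : H ⧸ K.subgroupOf H := Quotient.mk'' ⟨x, hx⟩ with hq
    set t : H := Quotient.out q with ht
    have hrel : (t : G)⁻¹ * x ∈ K := by
      have : Quotient.mk'' t = q := Quotient.out_eq' q
      have h2 := Quotient.exact' (this.trans hq)
      rw [QuotientGroup.leftRel_apply, Subgroup.mem_subgroupOf] at h2
      simpa using h2
    exact ⟨(t : G), ⟨q, rfl⟩, (t : G)⁻¹ * x, hrel, by group⟩
  exact ⟨T⁻¹, hTfin.inv, flip_cover hcov⟩

variable [MetricSpace G]

lemma cover_of_nbhd {S : Set G} (hSfin : S.Finite) (hSgen : Subgroup.closure S = ⊤)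
    (hword : IsWordMetric S) (H K : Subgroup G) (r : ℝ≥0)
    (hsub : (H : Set G) ⊆ nbhd r (K : Set G)) :
    ∃ F : Set G, F.Finite ∧ (H : Set G) ⊆ (K : Set G) * F := by
  set n : ℕ := ⌈(r : ℝ)⌉₊ with hn
  refine ⟨ball S n, ball_finite hSfin n, ?_⟩
  intro h hh
  obtain ⟨a, ha, hd⟩ := hsub hh
  have hdist : dist h a ≤ (r : ℝ) := by
    rw [← coe_nndist]; exact_mod_cast hd
  have hwl : (wordLength S (h⁻¹ * a) : ℝ) ≤ n := by
    rw [← hword h a]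
    exact hdist.trans (Nat.le_ceil _)
  have hwl' : wordLength S (h⁻¹ * a) ≤ n := by exact_mod_cast hwl
  have hb : (h⁻¹ * a)⁻¹ ∈ ball S n := ball_inv (mem_ball_of_wordLength hSgen hwl')
  have : h = a * (h⁻¹ * a)⁻¹ := by group
  rw [this]
  exact Set.mul_mem_mul ha hb

lemma nbhd_of_cover {S : Set G} (hword : IsWordMetric S) (H K : Subgroup G)
    (F : Set G) (hF : F.Finite) (hcov : (H : Set G) ⊆ (K : Set G) * F) :
    ∃ r : ℝ≥0, (H : Set G) ⊆ nbhd r (K : Set G) := by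
  set N : ℕ := hF.toFinset.sup (fun f => wordLength S f⁻¹) with hN
  refine ⟨(N : ℝ≥0), ?_⟩
  intro h hh
  obtain ⟨k, hk, f, hf, hkf⟩ := hcov hh
  have hkf' : k * f = h := hkf
  refine ⟨k, hk, ?_⟩
  have hinv : h⁻¹ * k = f⁻¹ := by rw [← hkf']; group
  have hdist : dist h k = (wordLength S f⁻¹ : ℝ) := by rw [hword h k, hinv]
  have hle : wordLength S f⁻¹ ≤ N := Finset.le_sup (f := fun g => wordLength S g⁻¹) (hF.mem_toFinset.mpr hf)
  rw [← NNReal.coe_le_coe, coe_nndist, hdist]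
  exact_mod_cast hle

lemma nbhd_mono {X : Type*} [PseudoMetricSpace X] {r r' : ℝ≥0} (h : r ≤ r') (A : Set X) :
    nbhd r A ⊆ nbhd r' A := fun _ ⟨a, ha, hd⟩ => ⟨a, ha, hd.trans h⟩

end WordAux

/-- Let `G` be a group generated by a finite set `S`, equipped with the
word metric, and let `H, K ≤ G` be subgroups. Then:
1. `H ⊆ N_r(K)` for some `r ≥ 0` iff `H` is commensurable to a subgroup of `K`
   (equivalently, `H ∩ K` has finite index in `H`);
2. the Hausdorff distance between `H` and `K` is finite iff `H` and `K` are
   commensurable (i.e. `H ∩ K` has finite index in both `H` and `K`). -/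
theorem subgroup_nbhd_iff_commensurable {G : Type*} [Group G] [MetricSpace G]
    (S : Set G) (hSfin : S.Finite) (hSgen : Subgroup.closure S = ⊤)
    (hword : IsWordMetric S) (H K : Subgroup G) :
    ((∃ r : ℝ≥0, (H : Set G) ⊆ nbhd r (K : Set G)) ↔ K.relIndex H ≠ 0) ∧
    (AtFiniteHausdorffDist (H : Set G) (K : Set G) ↔
      (K.relIndex H ≠ 0 ∧ H.relIndex K ≠ 0)) := by
  have key : ∀ H' K' : Subgroup G,
      (∃ r : ℝ≥0, (H' : Set G) ⊆ nbhd r (K' : Set G)) ↔ K'.relIndex H' ≠ 0 := by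
    intro H' K'
    constructor
    · rintro ⟨r, hr⟩
      obtain ⟨F, hFfin, hcov⟩ := WordAux.cover_of_nbhd hSfin hSgen hword H' K' r hr
      exact WordAux.relindex_ne_zero_of_cover H' K' F hFfin hcov
    · intro hrel
      obtain ⟨F, hFfin, hcov⟩ := WordAux.cover_of_relindex H' K' hrel
      exact WordAux.nbhd_of_cover hword H' K' F hFfin hcov
  refine ⟨key H K, ?_⟩
  constructor
  · rintro ⟨r, h1, h2⟩
    exact ⟨(key H K).mp ⟨r, h1⟩, (key K H).mp ⟨r, h2⟩⟩
  · rintro ⟨h1, h2⟩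
    obtain ⟨r1, hr1⟩ := (key H K).mpr h1
    obtain ⟨r2, hr2⟩ := (key K H).mpr h2
    exact ⟨max r1 r2, (hr1.trans (WordAux.nbhd_mono (le_max_left _ _) _)),
      (hr2.trans (WordAux.nbhd_mono (le_max_right _ _) _))⟩
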